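/- If there exists a configuration (v_r, b_k) with 2 ≤ k < v and r ≥ 1, then there exists a (K,F,Q,S) placement delivery array with K = vr/k (= b), F = v, Q = v − k, and S = v. -/
import Mathlib


open Finset

/-- A `(K, F, Q, S)` placement delivery array: an `F × K` array with entries in
`[S] ∪ {*}` (where `none` plays the role of `*`) satisfying conditions C1, C2, C3. -/
def IsPDA {K F S : ℕ} (Q : ℕ) (P : Fin F → Fin K → Option (Fin S)) : Prop :=
  -- C1: the symbol `*` appears exactly `Q` times in each column
  (∀ k : Fin K, (univ.filter fun j : Fin F => P j k = none).card = Q) ∧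
  -- C2: each integer `s ∈ [S]` occurs at least once in the array
  (∀ s : Fin S, ∃ j k, P j k = some s) ∧
  -- C3
  (∀ (j₁ j₂ : Fin F) (k₁ k₂ : Fin K) (s : Fin S), (j₁, k₁) ≠ (j₂, k₂) →
    P j₁ k₁ = some s → P j₂ k₂ = some s →
    j₁ ≠ j₂ ∧ k₁ ≠ k₂ ∧ P j₁ k₂ = none ∧ P j₂ k₁ = none)

/-- There exists a `(K, F, Q, S)` placement delivery array. -/
def ExistsPDA (K F Q S : ℕ) : Prop :=
  ∃ P : Fin F → Fin K → Option (Fin S), IsPDA Q P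

/-- A configuration `(v_r, b_k)`: `V` is a `v`-set of points, `B` a `b`-set of blocks,
each block is a `k`-subset, each point lies in exactly `r` blocks, and every
`2`-subset of points is contained in at most one block. -/
def IsConfiguration {V : Type} [Fintype V] [DecidableEq V] (B : Finset (Finset V))
    (v b r k : ℕ) : Prop :=
  Fintype.card V = v ∧ B.card = b ∧
  (∀ blk ∈ B, blk.card = k) ∧
  (∀ x : V, (B.filter fun blk => x ∈ blk).card = r) ∧
  (∀ x y : V, x ≠ y → (B.filter fun blk => x ∈ blk ∧ y ∈ blk).card ≤ 1)

/-- Configuration construction, parameter set 3: a configuration `(v_r, b_k)` with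
`2 ≤ k < v` and `r ≥ 1` yields a PDA with `K = vr/k (= b)`, `F = v`, `Q = v - k`,
`S = v`. -/
noncomputable def nxt {V : Type} [DecidableEq V] (blk : Finset V) (x : V) (hx : x ∈ blk) : V :=
  haveI : NeZero blk.card := ⟨(Finset.card_pos.mpr ⟨x, hx⟩).ne'⟩
  (blk.equivFin.symm (blk.equivFin ⟨x, hx⟩ + 1) : blk)

lemma nxt_mem {V : Type} [DecidableEq V] (blk : Finset V) (x : V) (hx : x ∈ blk) :
    nxt blk x hx ∈ blk := by
  unfold nxt; exact Finset.coe_mem _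

lemma nxt_inj {V : Type} [DecidableEq V] (blk : Finset V) (x y : V) (hx : x ∈ blk)
    (hy : y ∈ blk) (h : nxt blk x hx = nxt blk y hy) : x = y := by
  haveI : NeZero blk.card := ⟨(Finset.card_pos.mpr ⟨x, hx⟩).ne'⟩
  unfold nxt at h
  have h3 := blk.equivFin.symm.injective (Subtype.coe_injective h)
  have h4 := add_left_injective (1 : Fin blk.card) h3
  have h5 := blk.equivFin.injective h4
  exact congrArg Subtype.val h5

lemma nxt_ne {V : Type} [DecidableEq V] (blk : Finset V) (x : V) (hx : x ∈ blk)
    (h2 : 2 ≤ blk.card) : nxt blk x hx ≠ x := by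
  haveI : NeZero blk.card := ⟨by omega⟩
  intro h
  unfold nxt at h
  have h2' : blk.equivFin.symm (blk.equivFin ⟨x, hx⟩ + 1) = ⟨x, hx⟩ :=
    Subtype.coe_injective h
  have h3 : blk.equivFin ⟨x, hx⟩ + 1 = blk.equivFin ⟨x, hx⟩ := by
    have := congrArg blk.equivFin h2'
    simpa using this
  have h4 : (1 : Fin blk.card) = 0 := by
    have := add_right_cancel (a := (1 : Fin blk.card)) (b := blk.equivFin ⟨x, hx⟩)
      (c := 0) (by rw [add_comm, zero_add]; exact h3)
    exact this
  rw [Fin.one_eq_zero_iff] at h4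
  omega

lemma nxt_surj {V : Type} [DecidableEq V] (blk : Finset V) (y : V) (hy : y ∈ blk) :
    ∃ x, ∃ hx : x ∈ blk, nxt blk x hx = y := by
  haveI : NeZero blk.card := ⟨(Finset.card_pos.mpr ⟨y, hy⟩).ne'⟩
  refine ⟨(blk.equivFin.symm (blk.equivFin ⟨y, hy⟩ - 1) : blk),
    (blk.equivFin.symm _).2, ?_⟩
  unfold nxt
  simp only [Subtype.coe_eta, Equiv.apply_symm_apply, sub_add_cancel,
    Equiv.symm_apply_apply]

theorem exists_pda_of_configuration_three {V : Type} [Fintype V] [DecidableEq V]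
    (B : Finset (Finset V)) (v b r k : ℕ) (hk : 2 ≤ k) (hkv : k < v) (hr : 1 ≤ r)
    (hconf : IsConfiguration B v b r k) :
    ExistsPDA (v * r / k) v (v - k) v := by
  obtain ⟨hcard, hB, hblk, hpoint, hpair⟩ := hconf
  have hcount : B.card * k = v * r := by
    have hmid : ∑ blk ∈ B, blk.card = ∑ x : V, (B.filter fun blk => x ∈ blk).card := by
      simp only [Finset.card_filter]
      rw [Finset.sum_comm]
      refine Finset.sum_congr rfl fun blk _ => ?_
      simp [Finset.card_filter]
    calc B.card * k = ∑ blk ∈ B, blk.card := by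
          rw [Finset.sum_congr rfl hblk, Finset.sum_const, smul_eq_mul]
      _ = ∑ x : V, (B.filter fun blk => x ∈ blk).card := hmid
      _ = v * r := by
          rw [Finset.sum_congr rfl fun x _ => hpoint x, Finset.sum_const, smul_eq_mul,
            Finset.card_univ, hcard]
  have hb : B.card = v * r / k := by
    rw [← hcount, Nat.mul_div_cancel _ (by omega : 0 < k)]
  let e : V ≃ Fin v := Fintype.equivFinOfCardEq hcard
  let ce : Fin (v * r / k) ≃ {x // x ∈ B} := (finCongr hb.symm).trans B.equivFin.symm
  refine ⟨fun j c => if h : e.symm j ∈ (ce c : Finset V)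
    then some (e (nxt _ _ h)) else none, ?_, ?_, ?_⟩
  · -- C1
    intro c
    have hmem : (ce c : Finset V) ∈ B := (ce c).2
    have hcardblk : (ce c : Finset V).card = k := hblk _ hmem
    have heq : (univ.filter fun j : Fin v =>
        (if h : e.symm j ∈ (ce c : Finset V) then some (e (nxt _ _ h)) else none) = none)
        = univ.filter fun j : Fin v => e.symm j ∉ (ce c : Finset V) := by
      refine Finset.filter_congr fun j _ => ?_
      by_cases h : e.symm j ∈ (ce c : Finset V) <;> simp [h]
    rw [heq]
    have hbij : (univ.filter fun j : Fin v => e.symm j ∉ (ce c : Finset V)).card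
        = (univ.filter fun x : V => x ∉ (ce c : Finset V)).card := by
      apply Finset.card_bij' (fun j _ => e.symm j) (fun x _ => e x) <;> simp
    rw [hbij, Finset.filter_not, Finset.card_sdiff_of_subset (Finset.filter_subset _ _)]
    simp [Finset.filter_univ_mem, hcardblk, hcard]
  · -- C2
    intro s
    have hy : (B.filter fun blk => e.symm s ∈ blk).Nonempty := by
      rw [← Finset.card_pos, hpoint]; omega
    obtain ⟨blk, hblkmem⟩ := hy
    rw [Finset.mem_filter] at hblkmem
    obtain ⟨hblkB, hyblk⟩ := hblkmem
    set c : Fin (v * r / k) := ce.symm ⟨blk, hblkB⟩ with hcdef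
    have hc : (ce c : Finset V) = blk := by rw [hcdef, Equiv.apply_symm_apply]
    have hyblk' : e.symm s ∈ (ce c : Finset V) := hc ▸ hyblk
    obtain ⟨x, hx, hnxt⟩ := nxt_surj (ce c : Finset V) _ hyblk'
    refine ⟨e x, c, ?_⟩
    simp only [Equiv.symm_apply_apply]
    rw [dif_pos hx, hnxt, Equiv.apply_symm_apply]
  · -- C3
    intro j₁ j₂ c₁ c₂ s hne h1 h2
    dsimp only at h1 h2 ⊢
    set blk₁ := (ce c₁ : Finset V) with hblk1
    set blk₂ := (ce c₂ : Finset V) with hblk2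
    by_cases hx1 : e.symm j₁ ∈ blk₁
    swap
    · rw [dif_neg hx1] at h1; exact absurd h1 (by simp)
    by_cases hx2 : e.symm j₂ ∈ blk₂
    swap
    · rw [dif_neg hx2] at h2; exact absurd h2 (by simp)
    rw [dif_pos hx1] at h1
    rw [dif_pos hx2] at h2
    have hy : nxt blk₁ _ hx1 = nxt blk₂ _ hx2 := by
      apply e.injective
      rw [Option.some_inj.mp h1, Option.some_inj.mp h2]
    set y := nxt blk₁ _ hx1 with hydef
    have hy1 : y ∈ blk₁ := nxt_mem _ _ _
    have hy2 : y ∈ blk₂ := hy ▸ nxt_mem _ _ _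
    have hk1 : blk₁.card = k := hblk _ (ce c₁).2
    have hk2 : blk₂.card = k := hblk _ (ce c₂).2
    have hyne1 : y ≠ e.symm j₁ := nxt_ne _ _ _ (hk1 ▸ hk)
    have hyne2 : y ≠ e.symm j₂ := hy ▸ nxt_ne _ _ _ (hk2 ▸ hk)
    have hcne : c₁ ≠ c₂ := by
      rintro rfl
      have hx12 : e.symm j₁ = e.symm j₂ := nxt_inj _ _ _ hx1 hx2 hy
      exact hne (by rw [e.symm.injective hx12])
    have hbne : blk₁ ≠ blk₂ := fun h => hcne (ce.injective (Subtype.ext h))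
    have key : ∀ z : V, z ≠ y → z ∈ blk₁ → z ∈ blk₂ → False := by
      intro z hz hz1 hz2
      have h2le : 2 ≤ (B.filter fun blk => z ∈ blk ∧ y ∈ blk).card :=
        Finset.one_lt_card.mpr ⟨blk₁, Finset.mem_filter.mpr ⟨(ce c₁).2, hz1, hy1⟩,
          blk₂, Finset.mem_filter.mpr ⟨(ce c₂).2, hz2, hy2⟩, hbne⟩
      have := hpair z y hz
      omega
    have hn12 : e.symm j₁ ∉ blk₂ := fun h => key _ hyne1.symm hx1 h
    have hn21 : e.symm j₂ ∉ blk₁ := fun h => key _ hyne2.symm h hx2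
    have hjne : j₁ ≠ j₂ := by
      rintro rfl
      exact key _ hyne1.symm hx1 hx2
    exact ⟨hjne, hcne, dif_neg hn12, dif_neg hn21⟩
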